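/- Let m⃗ = (m_1,…,m_k) with m_i ∈ ℝ∖(0,1) be such that the generalized harmonic polylogarithm H_{m⃗}(x) is defined on (0,1) with ∫_0^1 |H_{m⃗}(x)| dx < ∞. Then for every nonnegative integer n: ∫_0^1 x^n · H_{1,m_1,…,m_k}(x) dx = (1/(n+1)) · Σ_{i=0}^{n} ∫_0^1 x^i · H_{m_1,…,m_k}(x) dx, where the left-hand integral exists as the limit of ∫_0^{ε} as ε → 1⁻. -/

import Mathlib

open scoped Classical
open MeasureTheory intervalIntegral Filter

/-- The weight-one integrand: `f_0(x) = 1/x` and `f_a(x) = 1/(|a| − sign(a)·x)` for `a ≠ 0`. -/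
noncomputable def GHf (a x : ℝ) : ℝ :=
  if a = 0 then 1 / x else 1 / (|a| - Real.sign a * x)

/-- The generalized harmonic polylogarithm `H_{m₁,…,m_w}(x)`: `1` for the empty word,
`(log x)^w / w!` for the all-zero word (note `Real.log` of a negative number equals the
log of its absolute value), and otherwise the oriented iterated integral
`∫_0^x f_{m₁}(y) H_{m₂,…,m_w}(y) dy`. -/
noncomputable def GH : List ℝ → ℝ → ℝ
  | [], _ => 1
  | m :: p, x =>
    if m = 0 ∧ ∀ y ∈ p, y = (0:ℝ) then
      Real.log x ^ (p.length + 1) / ((p.length + 1).factorial : ℝ)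
    else ∫ y in (0:ℝ)..x, GHf m y * GH p y

/-- `GHDef m⃗ x` states that the generalized harmonic polylogarithm `H_{m⃗}(x)` is
defined, i.e. all occurring iterated integrals converge. -/
def GHDef : List ℝ → ℝ → Prop
  | [], _ => True
  | m :: p, x =>
    (m = 0 ∧ ∀ y ∈ p, y = (0:ℝ)) ∨
    ((∀ y ∈ Set.uIoc (0:ℝ) x, GHDef p y) ∧
      IntervalIntegrable (fun y => GHf m y * GH p y) MeasureTheory.volume 0 x)

/-- Key Fubini-type computation: if `g` is integrable on `(0,1]`, then
`x ↦ xⁿ ∫₀ˣ g(y)/(1-y) dy` is integrable on `(0,1]` and its integral equals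
`(1/(n+1)) Σ_{i≤n} ∫₀¹ xⁱ g(x) dx`. -/
lemma gh_aux (g : ℝ → ℝ) (hg : IntegrableOn g (Set.Ioc 0 1) volume) (n : ℕ) :
    IntegrableOn (fun x => x ^ n * ∫ y in (0:ℝ)..x, (1 - y)⁻¹ * g y) (Set.Ioc 0 1) volume ∧
    (∫ x in Set.Ioc (0:ℝ) 1, x ^ n * ∫ y in (0:ℝ)..x, (1 - y)⁻¹ * g y) =
      (1 / ((n:ℝ) + 1)) * ∑ i ∈ Finset.range (n + 1), ∫ x in Set.Ioc (0:ℝ) 1, x ^ i * g x := by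
  set μ : Measure ℝ := volume.restrict (Set.Ioc (0:ℝ) 1) with hμ
  set h : ℝ → ℝ := fun y => (1 - y)⁻¹ * g y with hh
  set f : ℝ → ℝ → ℝ := fun x y => Set.indicator (Set.Iic x) (fun y => x ^ n * h y) y with hfdef
  have hg' : AEStronglyMeasurable g μ := hg.aestronglyMeasurable
  have hhm : AEStronglyMeasurable h μ :=
    ((measurable_const.sub measurable_id).inv.aestronglyMeasurable).mul hg'
  have hfm : AEStronglyMeasurable (Function.uncurry f) (μ.prod μ) := by
    have he : Function.uncurry f = Set.indicator {q : ℝ × ℝ | q.2 ≤ q.1}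
        (fun q => q.1 ^ n * h q.2) := by
      funext p
      simp only [Function.uncurry, hfdef, Set.indicator_apply, Set.mem_Iic, Set.mem_setOf_eq]
    rw [he]
    exact AEStronglyMeasurable.indicator
      (((continuous_pow n).aestronglyMeasurable.comp_fst).mul hhm.comp_snd)
      (measurableSet_le measurable_snd measurable_fst)
  have hslice_eq : ∀ y : ℝ, (fun x => f x y) = Set.indicator (Set.Ici y)
      (fun x => x ^ n * h y) := by
    intro y
    funext x
    simp only [hfdef, Set.indicator_apply, Set.mem_Iic, Set.mem_Ici]
  have hslice : ∀ y : ℝ, Integrable (fun x => f x y) μ := by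
    intro y
    rw [hslice_eq y]
    exact (((continuous_pow n).mul continuous_const).integrableOn_Ioc).indicator
      measurableSet_Ici
  have hsetmeas : ∀ y ∈ Set.Ioc (0:ℝ) 1, Set.Ici y ∩ Set.Ioc (0:ℝ) 1 = Set.Icc y 1 := by
    intro y hy
    ext z
    simp only [Set.mem_inter_iff, Set.mem_Ici, Set.mem_Ioc, Set.mem_Icc]
    constructor
    · rintro ⟨h1, _, h3⟩; exact ⟨h1, h3⟩
    · rintro ⟨h1, h2⟩; exact ⟨h1, lt_of_lt_of_le hy.1 h1, h2⟩
  have key_bound : ∀ y ∈ Set.Ioc (0:ℝ) 1, (∫ x, ‖f x y‖ ∂μ) ≤ |g y| := by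
    intro y hy
    have h1 : (fun x => ‖f x y‖) = Set.indicator (Set.Ici y)
        (fun x => ‖x ^ n * h y‖) := by
      funext x
      rw [congrFun (hslice_eq y) x]
      exact norm_indicator_eq_indicator_norm _ _
    rw [h1, MeasureTheory.integral_indicator measurableSet_Ici, hμ,
      Measure.restrict_restrict measurableSet_Ici, hsetmeas y hy]
    calc ∫ x in Set.Icc y 1, ‖x ^ n * h y‖ ≤ ∫ _x in Set.Icc y 1, |h y| := by
          apply setIntegral_mono_on
          · exact (((continuous_pow n).mul continuous_const).norm).integrableOn_Icc
          · exact integrableOn_const measure_Icc_lt_top.ne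
          · exact measurableSet_Icc
          · intro x hx
            rw [norm_mul, norm_pow, Real.norm_eq_abs, Real.norm_eq_abs]
            have hx1 : |x| ≤ 1 := abs_le.2 ⟨by linarith [hy.1, hx.1], hx.2⟩
            have : |x| ^ n ≤ 1 := pow_le_one₀ (abs_nonneg x) hx1
            nlinarith [abs_nonneg (h y)]
      _ = (1 - y) * |h y| := by
          rw [setIntegral_const, Real.volume_real_Icc_of_le (by linarith [hy.2] : y ≤ 1), smul_eq_mul]
      _ ≤ |g y| := by
          rcases eq_or_lt_of_le hy.2 with h2 | h2
          · simp [h2, abs_nonneg]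
          · have hne : (1:ℝ) - y ≠ 0 := by linarith
            rw [hh]
            rw [abs_mul, abs_inv, abs_of_pos (by linarith : (0:ℝ) < 1 - y)]
            rw [← mul_assoc, mul_inv_cancel₀ hne, one_mul]
  have hFint : Integrable (Function.uncurry f) (μ.prod μ) := by
    rw [integrable_prod_iff' hfm]
    constructor
    · exact Eventually.of_forall hslice
    · apply Integrable.mono' hg.abs (hfm.norm.prod_swap.integral_prod_right')
      filter_upwards [ae_restrict_mem measurableSet_Ioc] with y hy
      rw [Real.norm_of_nonneg (integral_nonneg fun x => norm_nonneg _)]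
      exact key_bound y hy
  have hEq : ∀ x ∈ Set.Ioc (0:ℝ) 1, (∫ y, f x y ∂μ) = x ^ n * ∫ y in (0:ℝ)..x, h y := by
    intro x hx
    have h2 : Set.Iic x ∩ Set.Ioc (0:ℝ) 1 = Set.Ioc 0 x := by
      ext z
      simp only [Set.mem_inter_iff, Set.mem_Iic, Set.mem_Ioc]
      constructor
      · rintro ⟨h1, h2, _⟩; exact ⟨h2, h1⟩
      · rintro ⟨h1, h2⟩; exact ⟨h2, h1, le_trans h2 hx.2⟩
    rw [hfdef]
    rw [MeasureTheory.integral_indicator measurableSet_Iic, hμ,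
      Measure.restrict_restrict measurableSet_Iic, h2,
      intervalIntegral.integral_of_le hx.1.le, MeasureTheory.integral_const_mul]
  have hInt1 : IntegrableOn (fun x => x ^ n * ∫ y in (0:ℝ)..x, h y) (Set.Ioc 0 1) volume := by
    have h1 := hFint.integral_prod_left
    apply h1.congr
    filter_upwards [ae_restrict_mem measurableSet_Ioc] with x hx
    exact hEq x hx
  have hEq2 : ∀ y ∈ Set.Ioc (0:ℝ) 1,
      (∫ x, f x y ∂μ) = ((1:ℝ) - y ^ (n + 1)) / ((n:ℝ) + 1) * h y := by
    intro y hy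
    rw [hslice_eq y, MeasureTheory.integral_indicator measurableSet_Ici, hμ,
      Measure.restrict_restrict measurableSet_Ici, hsetmeas y hy,
      integral_Icc_eq_integral_Ioc, ← intervalIntegral.integral_of_le hy.2,
      intervalIntegral.integral_mul_const, integral_pow, one_pow]
    try (push_cast; ring)
  have hne1 : ∀ᵐ y ∂μ, y ≠ (1:ℝ) := by
    refine ae_restrict_of_ae ?_
    rw [ae_iff]
    simp only [not_not, Set.setOf_eq_eq_singleton]
    exact Real.volume_singleton
  have hpow : ∀ i : ℕ, Integrable (fun y => y ^ i * g y) μ := by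
    intro i
    have hsm : AEStronglyMeasurable (fun y => y ^ i * g y) μ :=
      ((continuous_pow i).aestronglyMeasurable).mul hg'
    apply Integrable.mono' hg.abs hsm
    filter_upwards [ae_restrict_mem measurableSet_Ioc] with y hy
    rw [Real.norm_eq_abs, abs_mul, abs_pow]
    have hy1 : |y| ≤ 1 := abs_le.2 ⟨by linarith [hy.1], hy.2⟩
    have : |y| ^ i ≤ 1 := pow_le_one₀ (abs_nonneg y) hy1
    nlinarith [abs_nonneg (g y)]
  have hR : (∫ y, (∫ x, f x y ∂μ) ∂μ)
      = (1 / ((n:ℝ) + 1)) * ∑ i ∈ Finset.range (n + 1),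
          ∫ x in Set.Ioc (0:ℝ) 1, x ^ i * g x := by
    have e1 : (∫ y, (∫ x, f x y ∂μ) ∂μ)
        = ∫ y, (1 / ((n:ℝ) + 1)) * ∑ i ∈ Finset.range (n + 1), (y ^ i * g y) ∂μ := by
      apply MeasureTheory.integral_congr_ae
      filter_upwards [ae_restrict_mem measurableSet_Ioc, hne1] with y hy hy1
      rw [hEq2 y hy]
      have hyne : (1:ℝ) - y ≠ 0 := sub_ne_zero.mpr (Ne.symm hy1)
      have hgeo : (∑ i ∈ Finset.range (n + 1), y ^ i) = (1 - y ^ (n + 1)) * (1 - y)⁻¹ := by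
        rw [geom_sum_eq hy1, ← div_eq_mul_inv,
          div_eq_div_iff (sub_ne_zero.mpr hy1) hyne]
        ring
      calc (1 - y ^ (n + 1)) / ((n:ℝ) + 1) * h y
          = 1 / ((n:ℝ) + 1) * ((1 - y ^ (n + 1)) * (1 - y)⁻¹ * g y) := by
            simp only [hh]; ring
        _ = 1 / ((n:ℝ) + 1) * ((∑ i ∈ Finset.range (n + 1), y ^ i) * g y) := by rw [hgeo]
        _ = 1 / ((n:ℝ) + 1) * ∑ i ∈ Finset.range (n + 1), (y ^ i * g y) := by
            rw [Finset.sum_mul]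
    rw [e1, MeasureTheory.integral_const_mul, integral_finset_sum _ (fun i _ => hpow i)]
  refine ⟨hInt1, ?_⟩
  calc (∫ x in Set.Ioc (0:ℝ) 1, x ^ n * ∫ y in (0:ℝ)..x, h y)
      = ∫ x, (∫ y, f x y ∂μ) ∂μ := by
        refine setIntegral_congr_fun measurableSet_Ioc fun x hx => (hEq x hx).symm
    _ = ∫ y, (∫ x, f x y ∂μ) ∂μ := integral_integral_swap hFint
    _ = _ := hR

/-- Mellin recursion for a leading letter `1`: if the letters of `m⃗` lie in
`ℝ ∖ (0,1)`, `H_{m⃗}` is defined on `(0,1)` and `∫_0^1 |H_{m⃗}(x)| dx < ∞`, then for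
every `n ≥ 0` the integral `∫_0^1 xⁿ H_{1,m⃗}(x) dx` exists and
`∫_0^1 xⁿ H_{1,m⃗}(x) dx = (1/(n+1)) Σ_{i=0}^{n} ∫_0^1 xⁱ H_{m⃗}(x) dx`. -/
theorem gh_mellin_leading_one (ms : List ℝ) (hm : ∀ m ∈ ms, m ∉ Set.Ioo (0:ℝ) 1)
    (hdef : ∀ x ∈ Set.Ioo (0:ℝ) 1, GHDef ms x)
    (hint : IntervalIntegrable (fun x => GH ms x) MeasureTheory.volume 0 1)
    (n : ℕ) :
    IntervalIntegrable (fun x => x ^ n * GH ((1:ℝ) :: ms) x) MeasureTheory.volume 0 1 ∧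
    (∫ x in (0:ℝ)..1, x ^ n * GH ((1:ℝ) :: ms) x) =
      (1 / ((n : ℝ) + 1)) * ∑ i ∈ Finset.range (n + 1), ∫ x in (0:ℝ)..1, x ^ i * GH ms x := by
  have hGH1 : ∀ x : ℝ, GH ((1:ℝ) :: ms) x = ∫ y in (0:ℝ)..x, (1 - y)⁻¹ * GH ms y := by
    intro x
    have h1 : ¬((1:ℝ) = 0 ∧ ∀ y ∈ ms, y = (0:ℝ)) := by
      rintro ⟨h, -⟩; exact one_ne_zero h
    have h2 : (fun y => GHf 1 y * GH ms y) = fun y => (1 - y)⁻¹ * GH ms y := by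
      funext y
      simp [GHf, Real.sign_one, one_div]
    rw [GH, if_neg h1, h2]
  have hg : IntegrableOn (fun x => GH ms x) (Set.Ioc 0 1) volume := by
    rw [intervalIntegrable_iff, Set.uIoc_of_le zero_le_one] at hint
    exact hint
  obtain ⟨hI, hV⟩ := gh_aux (fun x => GH ms x) hg n
  simp only [hGH1]
  constructor
  · rw [intervalIntegrable_iff, Set.uIoc_of_le zero_le_one]
    exact hI
  · rw [intervalIntegral.integral_of_le zero_le_one]
    simp only [intervalIntegral.integral_of_le zero_le_one]
    exact hV
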